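/- Let X_{n,k}, n ∈ ℕ, k ∈ {0,...,k_n} be a triangular array such that for each n the variables X_{n,0},...,X_{n,k_n} are independent, and fix τ > 0. If ∑_{k=0}^{k_n} E[X_{n,k}·1_{|X_{n,k}|≤τ}] → 1 and ∑_{k=0}^{k_n}(P(|X_{n,k}| > τ) + Var(X_{n,k}·1_{|X_{n,k}|≤τ})) → 0 as n → ∞, then ∑_{k=0}^{k_n} X_{n,k} converges in probability to 1. -/

import Mathlib

open MeasureTheory ProbabilityTheory Filter
open scoped ENNReal

/-- Sufficiency part of the weak law for triangular arrays: if
`∑_{k≤kₙ} E[X_{n,k} 1_{|X_{n,k}|≤τ}] → 1` and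
`∑_{k≤kₙ} (P(|X_{n,k}| > τ) + Var(X_{n,k} 1_{|X_{n,k}|≤τ}))  → 0`,
then `∑_{k≤kₙ} X_{n,k} → 1` in probability. -/
theorem stmt4 {Ω : Type*} [MeasureSpace Ω] [IsProbabilityMeasure (ℙ : Measure Ω)]
    (k : ℕ → ℕ) (X : ℕ → ℕ → Ω → ℝ)
    (hmeas : ∀ n i, Measurable (X n i))
    (hindep : ∀ n, iIndepFun (m := fun _ => Real.measurableSpace)
      (fun i : Fin (k n + 1) => X n i) ℙ)
    (τ : ℝ) (hτ : 0 < τ)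
    (h1 : Tendsto (fun n => ∑ i ∈ Finset.range (k n + 1),
      ∫ ω, (if |X n i ω| ≤ τ then X n i ω else 0) ∂ℙ) atTop (nhds 1))
    (h2 : Tendsto (fun n => ∑ i ∈ Finset.range (k n + 1),
      ((ℙ {ω | τ < |X n i ω|}).toReal +
        variance (fun ω => if |X n i ω| ≤ τ then X n i ω else 0) ℙ)) atTop (nhds 0)) :
    TendstoInMeasure ℙ (fun n ω => ∑ i ∈ Finset.range (k n + 1), X n i ω) atTop
      (fun _ => (1 : ℝ)) := by
  classical
  have hfmeas : Measurable (fun x : ℝ => if |x| ≤ τ then x else 0) :=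
    Measurable.ite (measurableSet_le (measurable_id.abs) measurable_const)
      measurable_id measurable_const
  set Y : ℕ → ℕ → Ω → ℝ := fun n i ω => if |X n i ω| ≤ τ then X n i ω else 0 with hYdef
  have hYmeas : ∀ n i, Measurable (Y n i) := fun n i => hfmeas.comp (hmeas n i)
  have hYbdd : ∀ n i ω, ‖Y n i ω‖ ≤ τ := by
    intro n i ω
    simp only [hYdef, Real.norm_eq_abs]
    split
    · assumption
    · simpa using hτ.le
  have hYmem : ∀ n i, MemLp (Y n i) 2 ℙ := fun n i =>
    MemLp.of_bound (hYmeas n i).aestronglyMeasurable τ (ae_of_all _ (hYbdd n i))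
  have hYint : ∀ n i, Integrable (Y n i) ℙ := fun n i => (hYmem n i).integrable one_le_two
  -- the sum of truncated variables
  set T : ℕ → Ω → ℝ := fun n => ∑ i ∈ Finset.range (k n + 1), Y n i with hTdef
  have hTapp : ∀ n ω, T n ω = ∑ i ∈ Finset.range (k n + 1), Y n i ω := by
    intro n ω; simp [hTdef]
  have hTmem : ∀ n, MemLp (T n) 2 ℙ := fun n => memLp_finset_sum' _ (fun i _ => hYmem n i)
  -- pairwise independence of the truncated variables
  have hpair : ∀ n, Set.Pairwise ↑(Finset.range (k n + 1))
      (fun i j => IndepFun (Y n i) (Y n j) ℙ) := by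
    intro n i hi j hj hij
    have h := (hindep n).indepFun
      (i := (⟨i, Finset.mem_range.mp hi⟩ : Fin (k n + 1)))
      (j := (⟨j, Finset.mem_range.mp hj⟩ : Fin (k n + 1)))
      (by simpa [Fin.ext_iff] using hij)
    exact h.comp hfmeas hfmeas
  have hvarT : ∀ n, variance (T n) ℙ
      = ∑ i ∈ Finset.range (k n + 1), variance (Y n i) ℙ := fun n =>
    IndepFun.variance_sum (fun i _ => hYmem n i) (hpair n)
  have hmean : ∀ n, (∫ ω, T n ω ∂ℙ)
      = ∑ i ∈ Finset.range (k n + 1), ∫ ω, Y n i ω ∂ℙ := by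
    intro n
    simp only [hTapp]
    exact integral_finset_sum _ (fun i _ => hYint n i)
  have h1' : Tendsto (fun n => ∫ ω, T n ω ∂ℙ) atTop (nhds 1) := by
    simpa only [hmean] using h1
  -- split the limit hypothesis h2
  have h2' : Tendsto (fun n => (∑ i ∈ Finset.range (k n + 1),
      (ℙ {ω | τ < |X n i ω|}).toReal) + ∑ i ∈ Finset.range (k n + 1),
      variance (Y n i) ℙ) atTop (nhds 0) := by
    simpa only [Finset.sum_add_distrib] using h2
  have hAnn : ∀ n, 0 ≤ ∑ i ∈ Finset.range (k n + 1), (ℙ {ω | τ < |X n i ω|}).toReal :=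
    fun n => Finset.sum_nonneg fun i _ => ENNReal.toReal_nonneg
  have hBnn : ∀ n, 0 ≤ ∑ i ∈ Finset.range (k n + 1), variance (Y n i) ℙ :=
    fun n => Finset.sum_nonneg fun i _ => variance_nonneg _ _
  have h2a : Tendsto (fun n => ∑ i ∈ Finset.range (k n + 1),
      (ℙ {ω | τ < |X n i ω|}).toReal) atTop (nhds 0) :=
    squeeze_zero hAnn (fun n => le_add_of_nonneg_right (hBnn n)) h2'
  have h2b : Tendsto (fun n => ∑ i ∈ Finset.range (k n + 1),
      variance (Y n i) ℙ) atTop (nhds 0) :=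
    squeeze_zero hBnn (fun n => le_add_of_nonneg_left (hAnn n)) h2'
  rw [tendstoInMeasure_iff_dist]
  intro ε hε
  have hε2 : (0:ℝ) < ε / 2 := half_pos hε
  -- eventually the mean is close to 1
  have hm : ∀ᶠ n in atTop, |(∫ ω, T n ω ∂ℙ) - 1| < ε / 2 := by
    have := Metric.tendsto_nhds.mp h1' (ε / 2) hε2
    simpa [Real.dist_eq] using this
  -- the upper bound
  have hupper : Tendsto (fun n => (∑ i ∈ Finset.range (k n + 1), ℙ {ω | τ < |X n i ω|})
      + ENNReal.ofReal ((∑ i ∈ Finset.range (k n + 1), variance (Y n i) ℙ) / (ε/2)^2))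
      atTop (nhds 0) := by
    have hsum : ∀ n, (∑ i ∈ Finset.range (k n + 1), ℙ {ω | τ < |X n i ω|})
        = ENNReal.ofReal (∑ i ∈ Finset.range (k n + 1), (ℙ {ω | τ < |X n i ω|}).toReal) := by
      intro n
      rw [ENNReal.ofReal_sum_of_nonneg (fun i _ => ENNReal.toReal_nonneg)]
      exact Finset.sum_congr rfl fun i _ => (ENNReal.ofReal_toReal (measure_ne_top _ _)).symm
    simp only [hsum]
    have t1 : Tendsto (fun n => ENNReal.ofReal (∑ i ∈ Finset.range (k n + 1),
        (ℙ {ω | τ < |X n i ω|}).toReal)) atTop (nhds 0) := by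
      have := (ENNReal.continuous_ofReal.tendsto 0).comp h2a
      simpa [Function.comp_def] using this
    have t2 : Tendsto (fun n => ENNReal.ofReal ((∑ i ∈ Finset.range (k n + 1),
        variance (Y n i) ℙ) / (ε/2)^2)) atTop (nhds 0) := by
      have hb : Tendsto (fun n => (∑ i ∈ Finset.range (k n + 1),
          variance (Y n i) ℙ) / (ε/2)^2) atTop (nhds 0) := by
        simpa using h2b.div_const ((ε/2)^2)
      have := (ENNReal.continuous_ofReal.tendsto 0).comp hb
      simpa [Function.comp_def] using this
    simpa using t1.add t2
  refine tendsto_of_tendsto_of_tendsto_of_le_of_le' tendsto_const_nhds hupper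
    (Eventually.of_forall fun n => zero_le) ?_
  filter_upwards [hm] with n hn
  -- set inclusion
  have hsub : {ω | ε ≤ dist (∑ i ∈ Finset.range (k n + 1), X n i ω) (1:ℝ)}
      ⊆ (⋃ i ∈ Finset.range (k n + 1), {ω | τ < |X n i ω|})
        ∪ {ω | ε/2 ≤ |T n ω - ∫ ω, T n ω ∂ℙ|} := by
    intro ω hω
    by_cases hcase : ∀ i ∈ Finset.range (k n + 1), |X n i ω| ≤ τ
    · right
      have hST : T n ω = ∑ i ∈ Finset.range (k n + 1), X n i ω := by
        rw [hTapp]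
        exact Finset.sum_congr rfl fun i hi => if_pos (hcase i hi)
      have hω' : ε ≤ |T n ω - 1| := by
        rw [hST]
        simpa [Real.dist_eq] using hω
      have htri : |T n ω - 1| ≤ |T n ω - ∫ ω, T n ω ∂ℙ| + |(∫ ω, T n ω ∂ℙ) - 1| :=
        abs_sub_le _ _ _
      have : ε/2 ≤ |T n ω - ∫ ω, T n ω ∂ℙ| := by linarith
      exact this
    · left
      push_neg at hcase
      obtain ⟨i, hi, hlt⟩ := hcase
      exact Set.mem_biUnion hi (by simpa using hlt)
  calc ℙ {ω | ε ≤ dist (∑ i ∈ Finset.range (k n + 1), X n i ω) (1:ℝ)}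
      ≤ ℙ ((⋃ i ∈ Finset.range (k n + 1), {ω | τ < |X n i ω|})
        ∪ {ω | ε/2 ≤ |T n ω - ∫ ω, T n ω ∂ℙ|}) := measure_mono hsub
    _ ≤ ℙ (⋃ i ∈ Finset.range (k n + 1), {ω | τ < |X n i ω|})
        + ℙ {ω | ε/2 ≤ |T n ω - ∫ ω, T n ω ∂ℙ|} := measure_union_le _ _
    _ ≤ (∑ i ∈ Finset.range (k n + 1), ℙ {ω | τ < |X n i ω|})
        + ENNReal.ofReal ((∑ i ∈ Finset.range (k n + 1), variance (Y n i) ℙ) / (ε/2)^2) := by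
      refine add_le_add (measure_biUnion_finset_le _ _) ?_
      have := meas_ge_le_variance_div_sq (μ := ℙ) (hTmem n) hε2
      rwa [hvarT n] at this
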